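/- Let 0<q<p be coprime with p/q=[a_1,...,a_n], a_i≥2, and let q* denote the multiplicative inverse of q modulo p with 0<q*<p. Let A be the associated tridiagonal matrix, w=(a_1-2,...,a_n-2)^T, and I(p/q)=Σ_{j=1}^n (a_j-3). Then w^T A^{-1} w = 2 - I(p/q) - n - (q+q*+2)/p. -/

import Mathlib

open scoped Matrix

/-- Hirzebruch–Jung (negative-regular) continued fraction
`[a₁,...,aₙ] = a₁ - 1/(a₂ - 1/(⋯ - 1/aₙ))`. -/
def hjCF : List ℚ → ℚ
  | [] => 0
  | [a] => a
  | a :: b :: l => a - 1 / hjCF (b :: l)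

/-- The tridiagonal matrix with diagonal `-a₁,...,-aₙ` and off-diagonal entries `1`. -/
def tridiag {n : ℕ} (a : Fin n → ℤ) : Matrix (Fin n) (Fin n) ℚ :=
  Matrix.of fun i j =>
    if i = j then -(a i : ℚ)
    else if (i : ℕ) + 1 = (j : ℕ) ∨ (j : ℕ) + 1 = (i : ℕ) then 1 else 0


def contK : List ℤ → ℤ × ℤ
  | [] => (1, 0)
  | a :: l => (a * (contK l).1 - (contK l).2, (contK l).1)

def contM (l : List ℤ) : Matrix (Fin 2) (Fin 2) ℤ :=
  (l.map fun x => !![x, -1; 1, 0]).prod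

lemma contM_nil : contM [] = 1 := rfl

lemma contM_cons (x : ℤ) (l : List ℤ) :
    contM (x :: l) = !![x, -1; 1, 0] * contM l := by
  simp [contM]

lemma contM_append (l : List ℤ) (x : ℤ) :
    contM (l ++ [x]) = contM l * !![x, -1; 1, 0] := by
  simp [contM]

lemma mul_left_entries (a b c d : ℤ) (M : Matrix (Fin 2) (Fin 2) ℤ) :
    !![a, b; c, d] * M
      = !![a * M 0 0 + b * M 1 0, a * M 0 1 + b * M 1 1;
           c * M 0 0 + d * M 1 0, c * M 0 1 + d * M 1 1] := by
  rw [Matrix.eta_fin_two M, Matrix.mul_fin_two]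
  simp

lemma mul_right_entries (a b c d : ℤ) (M : Matrix (Fin 2) (Fin 2) ℤ) :
    M * !![a, b; c, d]
      = !![M 0 0 * a + M 0 1 * c, M 0 0 * b + M 0 1 * d;
           M 1 0 * a + M 1 1 * c, M 1 0 * b + M 1 1 * d] := by
  rw [Matrix.eta_fin_two M, Matrix.mul_fin_two]
  simp

lemma contM_col (l : List ℤ) : contM l 0 0 = (contK l).1 ∧ contM l 1 0 = (contK l).2 := by
  induction l with
  | nil => exact ⟨rfl, rfl⟩
  | cons x l ih =>
      rw [contM_cons, mul_left_entries, contK]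
      simp [ih.1, ih.2]
      ring

lemma contM_00 (l : List ℤ) : contM l 0 0 = (contK l).1 := (contM_col l).1
lemma contM_10 (l : List ℤ) : contM l 1 0 = (contK l).2 := (contM_col l).2

lemma contM_det (l : List ℤ) :
    contM l 0 0 * contM l 1 1 - contM l 0 1 * contM l 1 0 = 1 := by
  induction l with
  | nil => rfl
  | cons x l ih =>
      rw [contM_cons, mul_left_entries]
      simp
      ring_nf
      nlinarith [ih]

/-- positivity: all entries ≥ 2 gives 0 ≤ -(M 0 1) < M 0 0. -/
lemma contM_pos (l : List ℤ) (h : ∀ y ∈ l, 2 ≤ y) :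
    0 ≤ -(contM l 0 1) ∧ -(contM l 0 1) < contM l 0 0 := by
  induction l using List.reverseRecOn with
  | nil => simp [contM_nil]
  | append_singleton l x ih =>
      have hx : 2 ≤ x := h x (by simp)
      have ih' := ih (fun y hy => h y (by simp [hy]))
      rw [contM_append, mul_right_entries]
      simp
      constructor
      · linarith [ih'.1, ih'.2]
      · nlinarith [ih'.1, ih'.2]


lemma contK_pos (l : List ℤ) (h : ∀ y ∈ l, 2 ≤ y) :
    0 ≤ (contK l).2 ∧ (contK l).2 < (contK l).1 := by
  induction l with
  | nil => simp [contK]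
  | cons x l ih =>
      have hx : 2 ≤ x := h x (by simp)
      have ih' := ih (fun y hy => h y (by simp [hy]))
      rw [contK]
      refine ⟨by linarith [ih'.1, ih'.2], ?_⟩
      simp only
      nlinarith [ih'.1, ih'.2]

lemma contK_gcd (l : List ℤ) : Int.gcd (contK l).1 (contK l).2 = 1 := by
  rw [← Int.isCoprime_iff_gcd_eq_one]
  induction l with
  | nil => exact isCoprime_one_left
  | cons x l ih =>
      rw [contK]
      simp only
      have : x * (contK l).1 - (contK l).2 = -(contK l).2 + (contK l).1 * x := by ring
      rw [this]
      exact ((ih.symm.neg_left).add_mul_left_left x).symm.symm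

lemma contK_hj (l : List ℤ) (h : ∀ y ∈ l, 2 ≤ y) :
    hjCF (l.map fun z : ℤ => (z : ℚ)) = ((contK l).1 : ℚ) / ((contK l).2 : ℚ) := by
  induction l with
  | nil => simp [contK, hjCF]
  | cons x l ih =>
      have ih' := ih (fun y hy => h y (by simp [hy]))
      match l, ih' with
      | [], _ => simp [contK, hjCF]
      | b :: l, ih' =>
        have hpos := contK_pos (b :: l) (fun y hy => h y (List.mem_cons_of_mem _ hy))
        have h1 : (0:ℤ) < (contK (b :: l)).1 := lt_of_le_of_lt hpos.1 hpos.2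
        have h1q : ((contK (b :: l)).1 : ℚ) ≠ 0 := by exact_mod_cast h1.ne'
        show hjCF ((x:ℚ) :: (b:ℚ) :: (l.map fun z : ℤ => (z:ℚ))) = _
        rw [hjCF]
        have h2 : hjCF ((b:ℚ) :: l.map (fun z : ℤ => (z:ℚ))) =
            ((contK (b::l)).1 : ℚ) / ((contK (b::l)).2 : ℚ) := ih'
        rw [h2]
        have : contK (x :: b :: l)
            = (x * (contK (b::l)).1 - (contK (b::l)).2, (contK (b::l)).1) := rfl
        rw [this]
        set c1 := (contK (b::l)).1
        set c2 := (contK (b::l)).2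
        simp only
        rw [one_div_div]
        push_cast
        field_simp


lemma tridiag_apply {n : ℕ} (a : Fin n → ℤ) (i j : Fin n) :
    tridiag a i j = if (i:ℕ) = (j:ℕ) then -(a i : ℚ)
      else if (i : ℕ) + 1 = (j : ℕ) ∨ (j : ℕ) + 1 = (i : ℕ) then 1 else 0 := by
  simp [tridiag, Fin.ext_iff]

lemma submatrix_tridiag_succ {n : ℕ} (a : Fin (n+1) → ℤ) :
    (tridiag a).submatrix Fin.succ Fin.succ = tridiag (a ∘ Fin.succ) := by
  ext i j
  rw [Matrix.submatrix_apply, tridiag_apply, tridiag_apply]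
  simp only [Fin.val_succ, Function.comp_apply]
  by_cases h1 : (i:ℕ) = (j:ℕ)
  · simp [h1]
  · rw [if_neg (by omega), if_neg h1]
    by_cases h2 : (i:ℕ) + 1 = (j:ℕ) ∨ (j:ℕ) + 1 = (i:ℕ)
    · rw [if_pos (by omega), if_pos h2]
    · rw [if_neg (by omega), if_neg h2]

lemma det_tridiag : ∀ (n : ℕ) (a : Fin n → ℤ),
    (tridiag a).det = (-1)^n * ((contK (List.ofFn a)).1 : ℚ)
  | 0, a => by simp [Matrix.det_fin_zero, contK]
  | 1, a => by
      rw [Matrix.det_fin_one]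
      simp [tridiag_apply, List.ofFn_succ, contK]
  | (n+2), a => by
      rw [Matrix.det_succ_row_zero, Fin.sum_univ_succ, Fin.sum_univ_succ]
      have hrest : ∀ j : Fin n, (-1 : ℚ)^((j.succ.succ : Fin (n+2)):ℕ) *
          tridiag a 0 j.succ.succ *
          ((tridiag a).submatrix Fin.succ (j.succ.succ).succAbove).det = 0 := by
        intro j
        have : tridiag a 0 j.succ.succ = 0 := by
          rw [tridiag_apply, if_neg (by simp [Fin.val_succ]), if_neg (by simp [Fin.val_succ])]
        rw [this]; ring
      rw [Finset.sum_congr rfl (fun j _ => hrest j), Finset.sum_const, smul_zero]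
      -- second term's determinant: expand along first column
      have hB : ((tridiag a).submatrix Fin.succ ((1 : Fin (n+2)).succAbove)).det
          = (tridiag (a ∘ Fin.succ ∘ Fin.succ)).det := by
        rw [Matrix.det_succ_column_zero, Fin.sum_univ_succ]
        have hrest2 : ∀ i : Fin n,
            (-1 : ℚ)^((i.succ : Fin (n+1)):ℕ) *
              (tridiag a).submatrix Fin.succ ((1 : Fin (n+2)).succAbove) i.succ 0 *
              ((((tridiag a).submatrix Fin.succ
                ((1 : Fin (n+2)).succAbove)).submatrix i.succ.succAbove Fin.succ)).det = 0 := by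
          intro i
          have : (tridiag a).submatrix Fin.succ ((1 : Fin (n+2)).succAbove) i.succ 0 = 0 := by
            rw [Matrix.submatrix_apply, Fin.one_succAbove_zero, tridiag_apply,
              if_neg (by simp [Fin.val_succ]), if_neg (by simp [Fin.val_succ])]
          rw [this]; ring
        rw [Finset.sum_congr rfl (fun i _ => hrest2 i), Finset.sum_const, smul_zero, add_zero]
        have h10 : (tridiag a).submatrix Fin.succ ((1 : Fin (n+2)).succAbove) 0 0 = 1 := by
          rw [Matrix.submatrix_apply, Fin.one_succAbove_zero, tridiag_apply,
            if_neg (by simp), if_pos (by simp)]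
        rw [h10, Fin.succAbove_zero, Matrix.submatrix_submatrix]
        have hmap : ((1 : Fin (n+2)).succAbove ∘ Fin.succ) = (Fin.succ ∘ Fin.succ : Fin n → Fin (n+2)) :=
          funext fun j => Fin.one_succAbove_succ j
        rw [hmap]
        have : (tridiag a).submatrix (Fin.succ ∘ Fin.succ) (Fin.succ ∘ Fin.succ)
            = tridiag (a ∘ Fin.succ ∘ Fin.succ) := by
          rw [← Matrix.submatrix_submatrix, submatrix_tridiag_succ, submatrix_tridiag_succ]
          rfl
        rw [this]
        simp
      have hs0 : (Fin.succ 0 : Fin (n+2)) = 1 := rfl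
      rw [hs0, hB, Fin.succAbove_zero, submatrix_tridiag_succ,
        det_tridiag (n+1) (a ∘ Fin.succ), det_tridiag n (a ∘ Fin.succ ∘ Fin.succ)]
      have h00 : tridiag a 0 0 = -(a 0 : ℚ) := by
        rw [tridiag_apply, if_pos rfl]
      have h01 : tridiag a 0 1 = 1 := by
        rw [tridiag_apply, if_neg (by simp [Fin.val_one]), if_pos (by simp [Fin.val_one])]
      rw [h00, h01]
      have hK : (contK (List.ofFn a)).1
          = a 0 * (contK (List.ofFn (a ∘ Fin.succ))).1
            - (contK (List.ofFn (a ∘ Fin.succ ∘ Fin.succ))).1 := by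
        simp only [List.ofFn_succ, Function.comp_apply, Function.comp]
        rfl
      rw [hK]
      have hv1 : ((1 : Fin (n+2)) : ℕ) = 1 := rfl
      rw [hv1]
      simp only [Fin.val_zero, pow_zero, pow_one, one_mul, mul_one]
      push_cast
      ring


lemma tridiag_split {n : ℕ} (a : Fin n → ℤ) (i j : Fin n) :
    tridiag a i j = (if i = j then -(a i : ℚ) else 0)
      + (if (i:ℕ) + 1 = (j:ℕ) then 1 else 0) + (if (j:ℕ) + 1 = (i:ℕ) then 1 else 0) := by
  rw [tridiag_apply]
  rcases eq_or_ne (i : ℕ) (j : ℕ) with h | h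
  · rw [if_pos h, if_pos (Fin.ext h), if_neg (by omega), if_neg (by omega)]; ring
  · rw [if_neg h, if_neg (fun hh => h (congrArg Fin.val hh))]
    by_cases h1 : (i:ℕ) + 1 = (j:ℕ)
    · rw [if_pos (Or.inl h1), if_pos h1, if_neg (by omega)]; ring
    · by_cases h2 : (j:ℕ) + 1 = (i:ℕ)
      · rw [if_pos (Or.inr h2), if_neg h1, if_pos h2]; ring
      · rw [if_neg (by tauto), if_neg h1, if_neg h2]; ring

lemma tridiag_mulVec {n : ℕ} (a : Fin n → ℤ) (v : Fin n → ℚ) (i : Fin n) :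
    (tridiag a).mulVec v i =
      (if h : 0 < (i:ℕ) then v ⟨(i:ℕ) - 1, by omega⟩ else 0)
      - (a i : ℚ) * v i
      + (if h : (i:ℕ) + 1 < n then v ⟨(i:ℕ) + 1, h⟩ else 0) := by
  rw [Matrix.mulVec]
  show (∑ j, tridiag a i j * v j) = _
  have hsplit : ∀ j, tridiag a i j * v j =
      (if i = j then -(a i : ℚ) * v j else 0)
      + (if (i:ℕ) + 1 = (j:ℕ) then v j else 0)
      + (if (j:ℕ) + 1 = (i:ℕ) then v j else 0) := by
    intro j
    rw [tridiag_split]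
    split_ifs <;> ring
  rw [Finset.sum_congr rfl (fun j _ => hsplit j), Finset.sum_add_distrib,
    Finset.sum_add_distrib]
  have h1 : (∑ j, if i = j then -(a i : ℚ) * v j else 0) = -(a i : ℚ) * v i := by
    rw [Finset.sum_ite_eq]; simp
  have h2 : (∑ j : Fin n, if (i:ℕ) + 1 = (j:ℕ) then v j else 0)
      = (if h : (i:ℕ) + 1 < n then v ⟨(i:ℕ) + 1, h⟩ else 0) := by
    by_cases h : (i:ℕ) + 1 < n
    · rw [dif_pos h]
      have hc : ∀ j : Fin n, ((i:ℕ) + 1 = (j:ℕ)) ↔ (⟨(i:ℕ)+1, h⟩ : Fin n) = j := by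
        intro j; rw [Fin.ext_iff]
      rw [Finset.sum_congr rfl (fun j _ => by rw [if_congr (hc j) rfl rfl]),
        Finset.sum_ite_eq]
      simp
    · rw [dif_neg h]
      exact Finset.sum_eq_zero (fun j _ => by rw [if_neg (by omega)])
  have h3 : (∑ j : Fin n, if (j:ℕ) + 1 = (i:ℕ) then v j else 0)
      = (if h : 0 < (i:ℕ) then v ⟨(i:ℕ) - 1, by omega⟩ else 0) := by
    by_cases h : 0 < (i:ℕ)
    · rw [dif_pos h]
      have hc : ∀ j : Fin n, ((j:ℕ) + 1 = (i:ℕ)) ↔ (⟨(i:ℕ)-1, by omega⟩ : Fin n) = j := by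
        intro j; rw [Fin.ext_iff]; simp; omega
      rw [Finset.sum_congr rfl (fun j _ => by rw [if_congr (hc j) rfl rfl]),
        Finset.sum_ite_eq]
      simp
    · rw [dif_neg h]
      exact Finset.sum_eq_zero (fun j _ => by rw [if_neg (by omega)])
  rw [h1, h2, h3]
  ring

theorem wT_inv_w (p q qs : ℤ) (hq : 0 < q) (hqp : q < p) (hcop : Int.gcd p q = 1)
    (hqs : 0 < qs) (hqsp : qs < p) (hinv : q * qs ≡ 1 [ZMOD p])
    (n : ℕ) (a : Fin n → ℤ) (ha : ∀ i, 2 ≤ a i)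
    (hhj : hjCF (List.ofFn fun i => ((a i : ℚ))) = (p : ℚ) / q) :
    (fun i => (a i : ℚ) - 2) ⬝ᵥ ((tridiag a)⁻¹.mulVec (fun i => (a i : ℚ) - 2))
      = 2 - (∑ i, ((a i : ℚ) - 3)) - n - ((q : ℚ) + qs + 2) / p := by
  have hp : 0 < p := hq.trans hqp
  have hpQ : (p : ℚ) ≠ 0 := by exact_mod_cast hp.ne'
  have hqQ : (q : ℚ) ≠ 0 := by exact_mod_cast hq.ne'
  have hpqQ : (p : ℚ) / q ≠ 0 := by positivity
  set L := List.ofFn a with hLdef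
  have hall : ∀ y ∈ L, 2 ≤ y := by
    intro y hy
    rw [hLdef, List.mem_ofFn] at hy
    obtain ⟨i, rfl⟩ := hy
    exact ha i
  have hmap : (List.ofFn fun i => ((a i : ℚ))) = L.map (fun z : ℤ => (z : ℚ)) := by
    rw [hLdef, List.map_ofFn]
    rfl
  rw [hmap, contK_hj L hall] at hhj
  have hlen : L.length = n := List.length_ofFn
  -- n = 0 is impossible
  rcases Nat.eq_zero_or_pos n with hn0 | hn
  · exfalso
    subst hn0
    have : L = [] := List.eq_nil_of_length_eq_zero hlen
    rw [this] at hhj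
    simp [contK] at hhj
    exact hpqQ hhj.symm
  -- identify p and q with the continuants
  have hKpos := contK_pos L hall
  have hp'pos : 0 < (contK L).1 := lt_of_le_of_lt hKpos.1 hKpos.2
  have hq'pos : 0 < (contK L).2 := by
    rcases hKpos.1.lt_or_eq with h | h
    · exact h
    · exfalso
      rw [← h] at hhj
      simp only [Int.cast_zero, div_zero] at hhj
      exact hpqQ hhj.symm
  have hcross : (contK L).1 * q = p * (contK L).2 := by
    have h2Q : ((contK L).2 : ℚ) ≠ 0 := by exact_mod_cast hq'pos.ne'
    rw [div_eq_div_iff h2Q hqQ] at hhj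
    exact_mod_cast hhj
  have hcopK : IsCoprime ((contK L).1) ((contK L).2) :=
    Int.isCoprime_iff_gcd_eq_one.mpr (contK_gcd L)
  have hcoppq : IsCoprime p q := Int.isCoprime_iff_gcd_eq_one.mpr hcop
  have hdvd1 : p ∣ (contK L).1 :=
    hcoppq.dvd_of_dvd_mul_right ⟨(contK L).2, hcross⟩
  have hdvd2 : (contK L).1 ∣ p :=
    hcopK.dvd_of_dvd_mul_right ⟨q, hcross.symm⟩
  have hp' : (contK L).1 = p := Int.dvd_antisymm hp'pos.le hp.le hdvd2 hdvd1
  have hq' : (contK L).2 = q := by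
    have h2 := hcross
    rw [hp'] at h2
    exact (mul_left_cancel₀ hp.ne' h2).symm
  -- sequences of continuants
  set Zf : ℕ → ℤ := fun k => (contK (L.drop k)).1 with hZf
  set Cm : ℕ → Matrix (Fin 2) (Fin 2) ℤ := fun k => contM (L.take k) with hCm
  have hdropn : L.drop n = [] := by rw [← hlen]; exact List.drop_length
  have hZn : Zf n = 1 := by simp only [hZf, hdropn]; rfl
  have hdropk : ∀ k (h : k < n), L.drop k = a ⟨k, h⟩ :: L.drop (k+1) := by
    intro k h
    rw [List.drop_eq_getElem_cons (by omega : k < L.length)]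
    congr 1
    simp [hLdef, List.getElem_ofFn]
  have hZrec : ∀ k (h : k + 1 < n), Zf k = a ⟨k, by omega⟩ * Zf (k+1) - Zf (k+2) := by
    intro k h
    simp only [hZf]
    rw [hdropk k (by omega), contK, hdropk (k+1) h, contK]
  have hZlast : ∀ k (h : k + 1 = n), Zf k = a ⟨k, by omega⟩ * Zf (k+1) := by
    intro k h
    simp only [hZf]
    rw [hdropk k (by omega), contK]
    have hnil : L.drop (k+1) = [] := by rw [h]; exact hdropn
    rw [hnil]
    simp [contK]
  have hZ1 : Zf 1 = q := by
    rw [← hq']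
    have h0 : L = a ⟨0, hn⟩ :: L.drop 1 := by simpa using hdropk 0 hn
    simp only [hZf]
    conv_rhs => rw [h0]
    rfl
  have hZ0 : Zf 0 = p := by
    rw [← hp']
    simp [hZf]
  -- Y sequence via contM of take
  have hCm0 : Cm 0 = 1 := by simp only [hCm]; rw [List.take_zero]; rfl
  have htakek : ∀ k (h : k < n), L.take (k+1) = L.take k ++ [a ⟨k, h⟩] := by
    intro k h
    rw [List.take_succ]
    congr 1
    rw [List.getElem?_eq_getElem (by omega : k < L.length)]
    simp [hLdef, List.getElem_ofFn]
  have hCrec : ∀ k (h : k < n), Cm (k+1) = Cm k * !![a ⟨k, h⟩, -1; 1, 0] := by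
    intro k h
    simp only [hCm]
    rw [htakek k h, contM_append]
  have hY00 : ∀ k (h : k < n), Cm (k+1) 0 0 = a ⟨k, h⟩ * Cm k 0 0 + Cm k 0 1 := by
    intro k h
    rw [hCrec k h, mul_right_entries]
    simp
    ring
  have hY01 : ∀ k (h : k < n), Cm (k+1) 0 1 = -(Cm k 0 0) := by
    intro k h
    rw [hCrec k h, mul_right_entries]
    simp
  have hCn : Cm n = contM L := by
    simp only [hCm]
    rw [← hlen, List.take_length]
  have hM00 : contM L 0 0 = p := by rw [contM_00, hp']
  have hM10 : contM L 1 0 = q := by rw [contM_10, hq']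
  have hn1 : n - 1 + 1 = n := by omega
  have hM01 : contM L 0 1 = -(Cm (n-1) 0 0) := by
    rw [← hCn, ← hn1]
    exact hY01 (n-1) (by omega)
  set y : ℤ := Cm (n-1) 0 0 with hy
  have hy1 : 1 ≤ y := by
    have hposK := contK_pos (L.take (n-1)) (fun z hz => hall z (List.mem_of_mem_take hz))
    have : Cm (n-1) 0 0 = (contK (L.take (n-1))).1 := contM_00 _
    rw [hy, this]
    omega
  have hyp : y < p := by
    have hposM := contM_pos L hall
    rw [hM01] at hposM
    rw [← hM00]
    omega
  have hymod : q * y ≡ 1 [ZMOD p] := by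
    have hdet := contM_det L
    rw [hM00, hM10, hM01] at hdet
    rw [Int.modEq_iff_dvd]
    exact ⟨contM L 1 1, by linarith [hdet]⟩
  have hqsy : qs = y := by
    have h1 : p ∣ q * (qs - y) := by
      have := (hinv.trans hymod.symm).dvd
      have he : q * y - q * qs = -(q * (qs - y)) := by ring
      rw [he] at this
      exact (dvd_neg.mp this)
    have h2 : p ∣ qs - y := hcoppq.dvd_of_dvd_mul_left h1
    have h3 : qs - y = 0 := Int.eq_zero_of_abs_lt_dvd h2 (by rw [abs_lt]; omega)
    omega
  -- cast recursions to ℚ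
  have hZrecQ : ∀ k (h : k + 1 < n),
      (Zf k : ℚ) = (a ⟨k, by omega⟩ : ℚ) * (Zf (k+1) : ℚ) - (Zf (k+2) : ℚ) := by
    intro k h; exact_mod_cast congrArg (Int.cast : ℤ → ℚ) (hZrec k h)
  have hZlastQ : ∀ k (h : k + 1 = n),
      (Zf k : ℚ) = (a ⟨k, by omega⟩ : ℚ) * (Zf (k+1) : ℚ) := by
    intro k h; exact_mod_cast congrArg (Int.cast : ℤ → ℚ) (hZlast k h)
  have hY00Q : ∀ k (h : k < n),
      ((Cm (k+1) 0 0 : ℤ) : ℚ) = (a ⟨k, h⟩ : ℚ) * ((Cm k 0 0 : ℤ) : ℚ) + ((Cm k 0 1 : ℤ) : ℚ) := by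
    intro k h; exact_mod_cast congrArg (Int.cast : ℤ → ℚ) (hY00 k h)
  have hY01Q : ∀ k (h : k < n),
      ((Cm (k+1) 0 1 : ℤ) : ℚ) = -((Cm k 0 0 : ℤ) : ℚ) := by
    intro k h; exact_mod_cast congrArg (Int.cast : ℤ → ℚ) (hY01 k h)
  -- the explicit solution x of (tridiag a) x = w
  set x : Fin n → ℚ := fun i => -1 + (((Zf (i.1+1) : ℤ) : ℚ) + ((Cm i.1 0 0 : ℤ) : ℚ)) / p
    with hx
  have hC000 : ((Cm 0 0 0 : ℤ) : ℚ) = 1 := by rw [hCm0]; simp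
  have hC001 : ((Cm 0 0 1 : ℤ) : ℚ) = 0 := by rw [hCm0]; simp
  have hAx : (tridiag a).mulVec x = fun i => (a i : ℚ) - 2 := by
    funext i
    obtain ⟨k, hk⟩ := i
    rw [tridiag_mulVec]
    simp only [hx]
    by_cases h0 : 0 < k
    · rw [dif_pos h0]
      have hsub : k - 1 + 1 = k := by omega
      by_cases h1 : k + 1 < n
      · rw [dif_pos h1]
        have e1 := hZrecQ k h1
        have e2 := hY00Q k hk
        have e3 := hY01Q (k-1) (by omega)
        rw [hsub] at e3
        rw [e3] at e2
        rw [hsub, e1, e2]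
        have hA : (a ⟨k, by omega⟩ : ℚ) = (a ⟨k, hk⟩ : ℚ) := rfl
        rw [hA]
        field_simp
        ring
      · rw [dif_neg h1]
        have hkn : k + 1 = n := by omega
        have e1 := hZlastQ k hkn
        have e2 := hY00Q k hk
        have e3 := hY01Q (k-1) (by omega)
        rw [hsub] at e3
        rw [e3] at e2
        have e4 : ((Cm (k+1) 0 0 : ℤ) : ℚ) = p := by
          rw [hkn, hCn, hM00]
        have e5 : ((Cm (k-1) 0 0 : ℤ) : ℚ)
            = (a ⟨k, hk⟩ : ℚ) * ((Cm k 0 0 : ℤ) : ℚ) - p := by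
          rw [e4] at e2; linarith [e2]
        have hA : (a ⟨k, by omega⟩ : ℚ) = (a ⟨k, hk⟩ : ℚ) := rfl
        rw [hA] at e1
        rw [hsub, e1, e5]
        field_simp
        ring
    · rw [dif_neg h0]
      have hk0 : k = 0 := by omega
      subst hk0
      by_cases h1 : 0 + 1 < n
      · rw [dif_pos h1]
        have e1 := hZrecQ 0 h1
        have e2 := hY00Q 0 hk
        have e0 : ((Zf 0 : ℤ) : ℚ) = p := by exact_mod_cast congrArg (Int.cast : ℤ → ℚ) hZ0
        rw [hC000, hC001] at e2
        have hA : (a ⟨0, by omega⟩ : ℚ) = (a ⟨0, hk⟩ : ℚ) := rfl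
        rw [hA] at e1
        have e5 : ((Zf (0+2) : ℤ) : ℚ)
            = (a ⟨0, hk⟩ : ℚ) * ((Zf (0+1) : ℤ) : ℚ) - p := by linarith [e1, e0]
        rw [e5, e2, hC000]
        field_simp
        ring
      · rw [dif_neg h1]
        have hn1' : 0 + 1 = n := by omega
        have e1 := hZlastQ 0 hn1'
        have e0 : ((Zf 0 : ℤ) : ℚ) = p := by exact_mod_cast congrArg (Int.cast : ℤ → ℚ) hZ0
        have eZ1 : ((Zf (0+1) : ℤ) : ℚ) = 1 := by
          rw [hn1']; exact_mod_cast congrArg (Int.cast : ℤ → ℚ) hZn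
        have hA : (a ⟨0, by omega⟩ : ℚ) = (a ⟨0, hk⟩ : ℚ) := rfl
        rw [hA, eZ1, mul_one] at e1
        have eA : (a ⟨0, hk⟩ : ℚ) = (p : ℚ) := by linarith [e0, e1]
        rw [eZ1, hC000, eA]
        field_simp
        ring
  -- invertibility of the tridiagonal matrix
  have hdetA : (tridiag a).det ≠ 0 := by
    rw [det_tridiag n a]
    have h1 : ((contK (List.ofFn a)).1 : ℚ) ≠ 0 := by exact_mod_cast hp'pos.ne'
    intro hcontra
    rcases mul_eq_zero.mp hcontra with h | h
    · exact (pow_ne_zero n (by norm_num : (-1:ℚ) ≠ 0)) h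
    · exact h1 h
  have hinvx : (tridiag a)⁻¹.mulVec (fun i => (a i : ℚ) - 2) = x := by
    rw [← hAx, Matrix.mulVec_mulVec, Matrix.nonsing_inv_mul _ (isUnit_iff_ne_zero.mpr hdetA),
      Matrix.one_mulVec]
  rw [hinvx]
  -- symmetry of the tridiagonal matrix
  have hsym : (tridiag a)ᵀ = tridiag a := by
    ext i j
    rw [Matrix.transpose_apply, tridiag_apply, tridiag_apply]
    rcases eq_or_ne (i : ℕ) (j : ℕ) with h | h
    · have : i = j := Fin.ext h
      subst this
      simp
    · rw [if_neg (fun hh => h hh.symm), if_neg h, if_congr (or_comm) rfl rfl]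
  -- action on the all-ones vector
  have hA1 : (tridiag a).mulVec (fun _ => (1:ℚ)) = fun i =>
      -((a i : ℚ) - 2) - (if (i:ℕ) = 0 then 1 else 0) - (if (i:ℕ) + 1 = n then 1 else 0) := by
    funext i
    rw [tridiag_mulVec]
    have hilt : (i:ℕ) < n := i.isLt
    by_cases h0 : 0 < (i:ℕ)
    · rw [dif_pos h0, if_neg (by omega)]
      by_cases h1 : (i:ℕ) + 1 < n
      · rw [dif_pos h1, if_neg (by omega)]; ring
      · rw [dif_neg h1, if_pos (by omega)]; ring
    · rw [dif_neg h0, if_pos (by omega)]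
      by_cases h1 : (i:ℕ) + 1 < n
      · rw [dif_pos h1, if_neg (by omega)]; ring
      · rw [dif_neg h1, if_pos (by omega)]; ring
  -- the summation identity
  have e1 : (fun _ => (1:ℚ)) ⬝ᵥ ((tridiag a).mulVec x) = ∑ i, ((a i : ℚ) - 2) := by
    rw [hAx, dotProduct]
    simp
  have e2 : (fun _ => (1:ℚ)) ⬝ᵥ ((tridiag a).mulVec x)
      = ((tridiag a).mulVec (fun _ => (1:ℚ))) ⬝ᵥ x := by
    rw [Matrix.dotProduct_mulVec, ← Matrix.mulVec_transpose, hsym]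
  have e3 : ∑ i : Fin n, (if (i:ℕ) = 0 then (1:ℚ) else 0) * x i = x ⟨0, hn⟩ := by
    have hpt : ∀ i : Fin n, (if (i:ℕ) = 0 then (1:ℚ) else 0) * x i
        = if i = ⟨0, hn⟩ then x i else 0 := by
      intro i
      by_cases h : (i:ℕ) = 0
      · rw [if_pos h, if_pos (Fin.ext h), one_mul]
      · rw [if_neg h, if_neg (fun hh => h (by rw [hh])), zero_mul]
    rw [Finset.sum_congr rfl (fun i _ => hpt i), Finset.sum_ite_eq']
    simp
  have e4 : ∑ i : Fin n, (if (i:ℕ) + 1 = n then (1:ℚ) else 0) * x i = x ⟨n-1, by omega⟩ := by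
    have hpt : ∀ i : Fin n, (if (i:ℕ) + 1 = n then (1:ℚ) else 0) * x i
        = if i = ⟨n-1, by omega⟩ then x i else 0 := by
      intro i
      by_cases h : (i:ℕ) + 1 = n
      · rw [if_pos h, if_pos (Fin.ext (by simp; omega)), one_mul]
      · rw [if_neg h, if_neg (fun hh => h (by rw [hh]; simp; omega)), zero_mul]
    rw [Finset.sum_congr rfl (fun i _ => hpt i), Finset.sum_ite_eq']
    simp
  have e5 : ((tridiag a).mulVec (fun _ => (1:ℚ))) ⬝ᵥ x
      = -(∑ i, ((a i : ℚ) - 2) * x i) - x ⟨0, hn⟩ - x ⟨n-1, by omega⟩ := by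
    rw [hA1, dotProduct]
    have hpt : ∀ i : Fin n,
        (-((a i : ℚ) - 2) - (if (i:ℕ) = 0 then 1 else 0) - (if (i:ℕ) + 1 = n then 1 else 0)) * x i
        = -(((a i : ℚ) - 2) * x i) - (if (i:ℕ) = 0 then (1:ℚ) else 0) * x i
          - (if (i:ℕ) + 1 = n then (1:ℚ) else 0) * x i := by
      intro i; ring
    rw [Finset.sum_congr rfl (fun i _ => hpt i), Finset.sum_sub_distrib,
      Finset.sum_sub_distrib, e3, e4, Finset.sum_neg_distrib]
  have key : (∑ i, ((a i : ℚ) - 2) * x i)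
      = -(∑ i, ((a i : ℚ) - 2)) - x ⟨0, hn⟩ - x ⟨n-1, by omega⟩ := by
    have := e1.symm.trans (e2.trans e5)
    linarith [this]
  -- evaluate boundary values
  have x0val : x ⟨0, hn⟩ = -1 + ((q:ℚ) + 1) / p := by
    simp only [hx]
    rw [show ((Zf (0+1) : ℤ) : ℚ) = (q:ℚ) by exact_mod_cast congrArg (Int.cast : ℤ → ℚ) hZ1]
    rw [hC000]
  have xlval : x ⟨n-1, by omega⟩ = -1 + (1 + (qs:ℚ)) / p := by
    simp only [hx]
    rw [hn1]
    rw [show ((Zf n : ℤ) : ℚ) = 1 by exact_mod_cast congrArg (Int.cast : ℤ → ℚ) hZn]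
    rw [show ((Cm (n-1) 0 0 : ℤ) : ℚ) = (qs:ℚ) by exact_mod_cast congrArg (Int.cast : ℤ → ℚ) hqsy.symm]
  have hsum : (∑ i, ((a i : ℚ) - 2)) = (∑ i, ((a i : ℚ) - 3)) + n := by
    have hpt : ∀ i : Fin n, ((a i : ℚ) - 2) = ((a i : ℚ) - 3) + 1 := by intro i; ring
    rw [Finset.sum_congr rfl (fun i _ => hpt i), Finset.sum_add_distrib, Finset.sum_const,
      Finset.card_univ, Fintype.card_fin]
    simp
  show (∑ i, ((a i : ℚ) - 2) * x i) = _
  rw [key, hsum, x0val, xlval]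
  field_simp
  ring
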